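/- (Adams, weak endpoint) Let $0 \le \lambda < n$ and $0 < \alpha < n - \lambda$. Then the Riesz potential $I_\alpha$ is bounded from $M^{1,\lambda}(\mathbb{R}^n)$ to the weak Morrey space $M_*^{\frac{n-\lambda}{n-\lambda-\alpha},\lambda}(\mathbb{R}^n)$: there is $C = C(n,\alpha,\lambda)$ such that $\|I_\alpha f\|_{M_*^{\frac{n-\lambda}{n-\lambda-\alpha},\lambda}} \le C \|f\|_{M^{1,\lambda}}$. -/

import Mathlib

open MeasureTheory Metric ENNReal

/-- The Morrey norm `‖f‖_{M^{p,s}(Ω)} = sup_{x, r>0} r^{-s/p} ‖f‖_{L^p(B_r(x) ∩ Ω)}`. -/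
noncomputable def morreyNorm {n : ℕ} (p s : ℝ) (Ω : Set (EuclideanSpace ℝ (Fin n)))
    (f : EuclideanSpace ℝ (Fin n) → ℝ) : ℝ≥0∞ :=
  ⨆ (x : EuclideanSpace ℝ (Fin n)) (r : ℝ) (_ : 0 < r),
    ENNReal.ofReal (r ^ (-(s / p))) *
      eLpNorm ((Metric.ball x r ∩ Ω).indicator f) (ENNReal.ofReal p) volume

/-- The weak `L^q` quasinorm of `f` on a set `s`. -/
noncomputable def weakLpOn {n : ℕ} (q : ℝ) (f : EuclideanSpace ℝ (Fin n) → ℝ)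
    (s : Set (EuclideanSpace ℝ (Fin n))) : ℝ≥0∞ :=
  ⨆ (t : ℝ) (_ : 0 < t),
    ENNReal.ofReal t * (volume {x ∈ s | t < |f x|}) ^ (1 / q)

/-- The weak Morrey norm `‖f‖_{M_*^{q,s}(Ω)}`. -/
noncomputable def weakMorreyNorm {n : ℕ} (q s : ℝ) (Ω : Set (EuclideanSpace ℝ (Fin n)))
    (f : EuclideanSpace ℝ (Fin n) → ℝ) : ℝ≥0∞ :=
  ⨆ (x : EuclideanSpace ℝ (Fin n)) (r : ℝ) (_ : 0 < r),
    ENNReal.ofReal (r ^ (-(s / q))) * weakLpOn q f (Metric.ball x r ∩ Ω)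

/-- The Riesz potential `I_α f (x) = ∫ |x-y|^{α-n} |f(y)| dy`. -/
noncomputable def rieszPotential {n : ℕ} (α : ℝ) (f : EuclideanSpace ℝ (Fin n) → ℝ)
    (x : EuclideanSpace ℝ (Fin n)) : ℝ :=
  (∫⁻ y, ENNReal.ofReal (‖x - y‖ ^ (α - (n : ℝ)) * |f y|)).toReal

namespace AdamsAux

open Set

lemma dyadic_up {t : ℝ} (ht : 1 ≤ t) : ∃ k : ℕ, (2:ℝ)^(k:ℝ) ≤ t ∧ t < 2^((k:ℝ)+1) := by
  refine ⟨Nat.log 2 ⌊t⌋₊, ?_, ?_⟩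
  · have h1 : 1 ≤ ⌊t⌋₊ := Nat.le_floor (by exact_mod_cast ht)
    have h2 : 2 ^ Nat.log 2 ⌊t⌋₊ ≤ ⌊t⌋₊ := Nat.pow_log_le_self 2 (by omega)
    have h3 : ((⌊t⌋₊ : ℝ)) ≤ t := Nat.floor_le (by linarith)
    have : ((2 ^ Nat.log 2 ⌊t⌋₊ : ℕ) : ℝ) ≤ t := le_trans (by exact_mod_cast h2) h3
    rw [show ((Nat.log 2 ⌊t⌋₊ : ℝ)) = ((Nat.log 2 ⌊t⌋₊ : ℕ) : ℝ) from rfl,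
      Real.rpow_natCast]
    exact_mod_cast this
  · have h4 : ⌊t⌋₊ < 2 ^ (Nat.log 2 ⌊t⌋₊ + 1) := Nat.lt_pow_succ_log_self one_lt_two _
    have h5 : t < (⌊t⌋₊ : ℝ) + 1 := Nat.lt_floor_add_one t
    have h6 : ((⌊t⌋₊ : ℝ)) + 1 ≤ ((2 ^ (Nat.log 2 ⌊t⌋₊ + 1) : ℕ) : ℝ) := by exact_mod_cast h4
    have : t < ((2 ^ (Nat.log 2 ⌊t⌋₊ + 1) : ℕ) : ℝ) := lt_of_lt_of_le h5 h6
    rw [show ((Nat.log 2 ⌊t⌋₊ : ℝ) + 1) = ((Nat.log 2 ⌊t⌋₊ + 1 : ℕ) : ℝ) by push_cast; ring,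
      Real.rpow_natCast]
    exact_mod_cast this

lemma measurable_rpow_const {β : Type*} [MeasurableSpace β] {u : β → ℝ} (hu : Measurable u)
    (h0 : ∀ b, 0 ≤ u b) {c : ℝ} (hc : c ≠ 0) : Measurable fun b => u b ^ c := by
  have heq : (fun b => u b ^ c) =
      fun b => if u b = 0 then 0 else Real.exp (Real.log (u b) * c) := by
    funext b
    rcases eq_or_lt_of_le (h0 b) with h | h
    · simp [← h, Real.zero_rpow hc]
    · rw [if_neg (ne_of_gt h), Real.rpow_def_of_pos h]
  rw [heq]
  exact Measurable.ite (hu (measurableSet_singleton 0)) measurable_const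
    (Real.measurable_exp.comp ((Real.measurable_log.comp hu).mul_const c))

variable {n : ℕ} {α lam : ℝ} {f : EuclideanSpace ℝ (Fin n) → ℝ}

noncomputable def rkern (n : ℕ) (α : ℝ) (f : EuclideanSpace ℝ (Fin n) → ℝ)
    (x y : EuclideanSpace ℝ (Fin n)) : ℝ≥0∞ :=
  ENNReal.ofReal (‖x - y‖ ^ (α - (n : ℝ)) * |f y|)

lemma measurable_rkern (hf : Measurable f) (hc : α - (n:ℝ) ≠ 0) :
    Measurable fun p : EuclideanSpace ℝ (Fin n) × EuclideanSpace ℝ (Fin n) =>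
      rkern n α f p.1 p.2 := by
  apply Measurable.ennreal_ofReal
  exact (measurable_rpow_const ((measurable_fst.sub measurable_snd).norm)
    (fun p => norm_nonneg _) hc).mul ((hf.comp measurable_snd).abs)

lemma ann_far (hα : α - (n:ℝ) ≤ 0) (x : EuclideanSpace ℝ (Fin n)) {a b : ℝ} (ha : 0 < a) :
    ∫⁻ y in {y | a ≤ ‖x - y‖ ∧ ‖x - y‖ < b}, rkern n α f x y
      ≤ ENNReal.ofReal (a ^ (α - (n:ℝ))) * ∫⁻ y in ball x b, ENNReal.ofReal |f y| := by
  have hS : MeasurableSet {y : EuclideanSpace ℝ (Fin n) | a ≤ ‖x - y‖ ∧ ‖x - y‖ < b} := by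
    have hcont : Measurable fun y : EuclideanSpace ℝ (Fin n) => ‖x - y‖ :=
      (measurable_const.sub measurable_id).norm
    exact (measurableSet_le measurable_const hcont).inter
      (measurableSet_lt hcont measurable_const)
  have hsub : {y : EuclideanSpace ℝ (Fin n) | a ≤ ‖x - y‖ ∧ ‖x - y‖ < b} ⊆ ball x b := by
    intro y hy
    simp only [mem_ball, dist_eq_norm, ← norm_sub_rev x y]
    exact hy.2
  calc ∫⁻ y in {y | a ≤ ‖x - y‖ ∧ ‖x - y‖ < b}, rkern n α f x y
      ≤ ∫⁻ y in {y | a ≤ ‖x - y‖ ∧ ‖x - y‖ < b},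
          ENNReal.ofReal (a ^ (α - (n:ℝ))) * ENNReal.ofReal |f y| := by
        apply setLIntegral_mono' hS
        intro y hy
        rw [rkern, ← ENNReal.ofReal_mul (Real.rpow_nonneg ha.le _)]
        exact ENNReal.ofReal_le_ofReal (mul_le_mul_of_nonneg_right
          (Real.rpow_le_rpow_of_nonpos ha hy.1 hα) (abs_nonneg _))
    _ = ENNReal.ofReal (a ^ (α - (n:ℝ))) *
          ∫⁻ y in {y | a ≤ ‖x - y‖ ∧ ‖x - y‖ < b}, ENNReal.ofReal |f y| :=
        lintegral_const_mul' _ _ ENNReal.ofReal_ne_top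
    _ ≤ _ := mul_le_mul_right (lintegral_mono_set hsub) _

lemma ann_near (hα : α - (n:ℝ) ≤ 0) (y : EuclideanSpace ℝ (Fin n)) {a b : ℝ} (ha : 0 < a) :
    ∫⁻ x in {x | a < ‖x - y‖ ∧ ‖x - y‖ ≤ b}, ENNReal.ofReal (‖x - y‖ ^ (α - (n:ℝ)))
      ≤ ENNReal.ofReal (a ^ (α - (n:ℝ))) * volume (closedBall y b) := by
  have hcont : Measurable fun x : EuclideanSpace ℝ (Fin n) => ‖x - y‖ :=
    (measurable_id.sub measurable_const).norm
  have hS : MeasurableSet {x : EuclideanSpace ℝ (Fin n) | a < ‖x - y‖ ∧ ‖x - y‖ ≤ b} :=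
    (measurableSet_lt measurable_const hcont).inter (measurableSet_le hcont measurable_const)
  have hsub : {x : EuclideanSpace ℝ (Fin n) | a < ‖x - y‖ ∧ ‖x - y‖ ≤ b} ⊆ closedBall y b := by
    intro x hx
    simp only [mem_closedBall, dist_eq_norm]
    exact hx.2
  calc ∫⁻ x in {x | a < ‖x - y‖ ∧ ‖x - y‖ ≤ b}, ENNReal.ofReal (‖x - y‖ ^ (α - (n:ℝ)))
      ≤ ∫⁻ _x in {x | a < ‖x - y‖ ∧ ‖x - y‖ ≤ b}, ENNReal.ofReal (a ^ (α - (n:ℝ))) := by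
        apply setLIntegral_mono' hS
        intro x hx
        exact ENNReal.ofReal_le_ofReal
          (Real.rpow_le_rpow_of_nonpos ha hx.1.le hα)
    _ = ENNReal.ofReal (a ^ (α - (n:ℝ))) *
          volume {x : EuclideanSpace ℝ (Fin n) | a < ‖x - y‖ ∧ ‖x - y‖ ≤ b} :=
        setLIntegral_const _ _
    _ ≤ _ := mul_le_mul_right (measure_mono hsub) _

lemma far_bound (hα : α - (n:ℝ) ≤ 0) {M : ℝ≥0∞}
    (hMor : ∀ x r, 0 < r →
      ∫⁻ y in ball x r, ENNReal.ofReal |f y| ≤ ENNReal.ofReal (r ^ lam) * M)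
    (hβ : α + lam - (n:ℝ) < 0) (x : EuclideanSpace ℝ (Fin n)) {δ : ℝ} (hδ : 0 < δ) :
    ∫⁻ y in {y | δ ≤ ‖x - y‖}, rkern n α f x y
      ≤ ENNReal.ofReal ((2:ℝ)^lam * (1 - (2:ℝ)^(α+lam-(n:ℝ)))⁻¹ * δ^(α+lam-(n:ℝ))) * M := by
  set c : ℝ := α + lam - (n:ℝ) with hc
  have h2 : (0:ℝ) < 2 := two_pos
  set A : ℕ → Set (EuclideanSpace ℝ (Fin n)) :=
    fun k => {y | δ * 2^(k:ℝ) ≤ ‖x - y‖ ∧ ‖x - y‖ < δ * 2^((k:ℝ)+1)} with hA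
  have hcover : {y : EuclideanSpace ℝ (Fin n) | δ ≤ ‖x - y‖} ⊆ ⋃ k, A k := by
    intro y hy
    have hy' : δ ≤ ‖x - y‖ := hy
    have ht : 1 ≤ ‖x - y‖ / δ := (one_le_div hδ).mpr hy'
    obtain ⟨k, hk1, hk2⟩ := dyadic_up ht
    refine mem_iUnion.mpr ⟨k, ?_, ?_⟩
    · calc δ * 2^(k:ℝ) = 2^(k:ℝ) * δ := by ring
        _ ≤ ‖x - y‖ := (le_div_iff₀ hδ).mp hk1
    · calc ‖x - y‖ = (‖x - y‖ / δ) * δ := by field_simp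
        _ < 2^((k:ℝ)+1) * δ := mul_lt_mul_of_pos_right hk2 hδ
        _ = δ * 2^((k:ℝ)+1) := by ring
  have hterm : ∀ k : ℕ, ∫⁻ y in A k, rkern n α f x y ≤
      (ENNReal.ofReal ((2:ℝ)^lam * δ^c) * M) * (ENNReal.ofReal ((2:ℝ)^c))^k := by
    intro k
    have hpos : 0 < δ * 2^(k:ℝ) := mul_pos hδ (Real.rpow_pos_of_pos h2 _)
    have hb : (0:ℝ) < δ * 2^((k:ℝ)+1) := mul_pos hδ (Real.rpow_pos_of_pos h2 _)
    have step := (ann_far (f := f) hα x hpos).trans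
      (mul_le_mul_right (hMor x _ hb) _)
    refine step.trans (le_of_eq ?_)
    have key : (δ * 2^(k:ℝ))^(α-(n:ℝ)) * (δ * 2^((k:ℝ)+1))^lam
        = (2:ℝ)^lam * δ^c * ((2:ℝ)^c)^k := by
      have e1 : (δ * 2^(k:ℝ))^(α-(n:ℝ)) = δ^(α-(n:ℝ)) * 2^((k:ℝ)*(α-(n:ℝ))) := by
        rw [Real.mul_rpow hδ.le (Real.rpow_nonneg h2.le _), ← Real.rpow_mul h2.le]
      have e2 : (δ * 2^((k:ℝ)+1))^lam = δ^lam * 2^(((k:ℝ)+1)*lam) := by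
        rw [Real.mul_rpow hδ.le (Real.rpow_nonneg h2.le _), ← Real.rpow_mul h2.le]
      have e3 : ((2:ℝ)^c)^k = (2:ℝ)^(c*(k:ℝ)) := by
        rw [← Real.rpow_natCast ((2:ℝ)^c) k, ← Real.rpow_mul h2.le]
      rw [e1, e2, e3]
      calc δ^(α-(n:ℝ)) * 2^((k:ℝ)*(α-(n:ℝ))) * (δ^lam * 2^(((k:ℝ)+1)*lam))
          = (δ^(α-(n:ℝ)) * δ^lam) * ((2:ℝ)^((k:ℝ)*(α-(n:ℝ))) * 2^(((k:ℝ)+1)*lam)) := by ring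
        _ = δ^((α-(n:ℝ))+lam) * (2:ℝ)^((k:ℝ)*(α-(n:ℝ)) + ((k:ℝ)+1)*lam) := by
            rw [← Real.rpow_add hδ, ← Real.rpow_add h2]
        _ = δ^c * (2:ℝ)^(lam + c*(k:ℝ)) := by
            rw [show (α-(n:ℝ))+lam = c by rw [hc]; ring,
              show (k:ℝ)*(α-(n:ℝ)) + ((k:ℝ)+1)*lam = lam + c*(k:ℝ) by rw [hc]; ring]
        _ = (2:ℝ)^lam * δ^c * (2:ℝ)^(c*(k:ℝ)) := by
            rw [Real.rpow_add h2]; ring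
    rw [← mul_assoc, ← ENNReal.ofReal_mul (Real.rpow_nonneg hpos.le _), key,
      ENNReal.ofReal_mul (by positivity), ENNReal.ofReal_pow (Real.rpow_nonneg h2.le _)]
    ring
  have hρ : (2:ℝ)^c < 1 := Real.rpow_lt_one_of_one_lt_of_neg one_lt_two hβ
  have hρ0 : (0:ℝ) < (2:ℝ)^c := Real.rpow_pos_of_pos h2 _
  calc ∫⁻ y in {y | δ ≤ ‖x - y‖}, rkern n α f x y
      ≤ ∫⁻ y in ⋃ k, A k, rkern n α f x y := lintegral_mono_set hcover
    _ ≤ ∑' k, ∫⁻ y in A k, rkern n α f x y := lintegral_iUnion_le _ _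
    _ ≤ ∑' k, (ENNReal.ofReal ((2:ℝ)^lam * δ^c) * M) * (ENNReal.ofReal ((2:ℝ)^c))^k :=
        ENNReal.tsum_le_tsum hterm
    _ = (ENNReal.ofReal ((2:ℝ)^lam * δ^c) * M) * ∑' k, (ENNReal.ofReal ((2:ℝ)^c))^k :=
        ENNReal.tsum_mul_left
    _ = (ENNReal.ofReal ((2:ℝ)^lam * δ^c) * M) * (1 - ENNReal.ofReal ((2:ℝ)^c))⁻¹ := by
        rw [ENNReal.tsum_geometric]
    _ = ENNReal.ofReal ((2:ℝ)^lam * (1 - (2:ℝ)^c)⁻¹ * δ^c) * M := by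
        rw [show (1:ℝ≥0∞) - ENNReal.ofReal ((2:ℝ)^c) = ENNReal.ofReal (1 - (2:ℝ)^c) by
            rw [← ENNReal.ofReal_one, ← ENNReal.ofReal_sub _ hρ0.le],
          ← ENNReal.ofReal_inv_of_pos (by linarith),
          show (2:ℝ)^lam * (1 - (2:ℝ)^c)⁻¹ * δ^c = ((2:ℝ)^lam * δ^c) * (1-(2:ℝ)^c)⁻¹ by ring,
          ENNReal.ofReal_mul (by positivity)]
        rw [ENNReal.ofReal_mul (by positivity), ENNReal.ofReal_mul (by positivity)]
        ring

lemma K_bound (hα0 : 0 < α) (hαn : α - (n:ℝ) < 0) (y : EuclideanSpace ℝ (Fin n))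
    {δ : ℝ} (hδ : 0 < δ) :
    ∫⁻ x in {x | ‖x - y‖ < δ}, ENNReal.ofReal (‖x - y‖ ^ (α - (n:ℝ)))
      ≤ ENNReal.ofReal ((2:ℝ)^((n:ℝ)-α) * (1 - (2:ℝ)^(-α))⁻¹ * δ^α) *
          volume (ball (0 : EuclideanSpace ℝ (Fin n)) 1) := by
  have h2 : (0:ℝ) < 2 := two_pos
  set A : ℕ → Set (EuclideanSpace ℝ (Fin n)) :=
    fun k => {x | δ * 2^(-(k:ℝ)-1) < ‖x - y‖ ∧ ‖x - y‖ ≤ δ * 2^(-(k:ℝ))} with hA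
  have hcover : {x : EuclideanSpace ℝ (Fin n) | ‖x - y‖ < δ} ⊆ {y} ∪ ⋃ k, A k := by
    intro x hx
    rcases eq_or_lt_of_le (norm_nonneg (x - y)) with h0 | h0
    · left
      have : x - y = 0 := by rw [← norm_eq_zero, ← h0]
      simp [sub_eq_zero.mp this]
    · right
      have hx' : ‖x - y‖ < δ := hx
      have ht : 1 ≤ δ / ‖x - y‖ := (one_le_div h0).mpr hx'.le
      obtain ⟨k, hk1, hk2⟩ := dyadic_up ht
      refine mem_iUnion.mpr ⟨k, ?_, ?_⟩
      · have : δ < 2^((k:ℝ)+1) * ‖x - y‖ := by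
          have := (div_lt_iff₀ h0).mp hk2
          linarith
        have h2k : (0:ℝ) < 2^((k:ℝ)+1) := Real.rpow_pos_of_pos h2 _
        calc δ * 2^(-(k:ℝ)-1) = δ / 2^((k:ℝ)+1) := by
              rw [show -(k:ℝ)-1 = -((k:ℝ)+1) by ring, Real.rpow_neg h2.le]
              ring
          _ < ‖x - y‖ := by rw [div_lt_iff₀ h2k]; linarith [mul_comm (2^((k:ℝ)+1)) ‖x - y‖]
      · have : 2^(k:ℝ) * ‖x - y‖ ≤ δ := by
          have := (le_div_iff₀ h0).mp hk1
          linarith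
        have h2k : (0:ℝ) < 2^(k:ℝ) := Real.rpow_pos_of_pos h2 _
        calc ‖x - y‖ ≤ δ / 2^(k:ℝ) := by
              rw [le_div_iff₀ h2k]; linarith [mul_comm ‖x - y‖ (2^(k:ℝ))]
          _ = δ * 2^(-(k:ℝ)) := by rw [Real.rpow_neg h2.le]; ring
  have hsing : ∫⁻ x in ({y} : Set (EuclideanSpace ℝ (Fin n))),
      ENNReal.ofReal (‖x - y‖ ^ (α - (n:ℝ))) = 0 := by
    have hle : ∫⁻ x in ({y} : Set (EuclideanSpace ℝ (Fin n))),
        ENNReal.ofReal (‖x - y‖ ^ (α - (n:ℝ)))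
          ≤ ∫⁻ _x in ({y} : Set (EuclideanSpace ℝ (Fin n))), 0 := by
      apply setLIntegral_mono' (measurableSet_singleton y)
      intro x hx
      rcases hx with rfl
      simp [Real.zero_rpow (ne_of_lt hαn)]
    simpa using hle
  have hterm : ∀ k : ℕ, ∫⁻ x in A k, ENNReal.ofReal (‖x - y‖ ^ (α - (n:ℝ))) ≤
      (ENNReal.ofReal ((2:ℝ)^((n:ℝ)-α) * δ^α) *
        volume (ball (0 : EuclideanSpace ℝ (Fin n)) 1)) * (ENNReal.ofReal ((2:ℝ)^(-α)))^k := by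
    intro k
    have hpos : 0 < δ * 2^(-(k:ℝ)-1) := mul_pos hδ (Real.rpow_pos_of_pos h2 _)
    have hb : (0:ℝ) < δ * 2^(-(k:ℝ)) := mul_pos hδ (Real.rpow_pos_of_pos h2 _)
    have step := ann_near (n := n) hαn.le y hpos (b := δ * 2^(-(k:ℝ)))
    have hvol : volume (closedBall y (δ * 2^(-(k:ℝ)))) =
        ENNReal.ofReal ((δ * 2^(-(k:ℝ))) ^ ((n:ℕ) : ℝ)) *
          volume (ball (0 : EuclideanSpace ℝ (Fin n)) 1) := by
      rw [Measure.addHaar_closedBall _ _ hb.le, finrank_euclideanSpace_fin,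
        ← Real.rpow_natCast _ n]
    refine step.trans (le_of_eq ?_)
    rw [hvol, ← mul_assoc, ← ENNReal.ofReal_mul (Real.rpow_nonneg hpos.le _)]
    have key : (δ * 2^(-(k:ℝ)-1))^(α-(n:ℝ)) * (δ * 2^(-(k:ℝ)))^((n:ℕ):ℝ)
        = (2:ℝ)^((n:ℝ)-α) * δ^α * ((2:ℝ)^(-α))^k := by
      have e1 : (δ * 2^(-(k:ℝ)-1))^(α-(n:ℝ)) = δ^(α-(n:ℝ)) * 2^((-(k:ℝ)-1)*(α-(n:ℝ))) := by
        rw [Real.mul_rpow hδ.le (Real.rpow_nonneg h2.le _), ← Real.rpow_mul h2.le]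
      have e2 : (δ * 2^(-(k:ℝ)))^((n:ℕ):ℝ) = δ^((n:ℕ):ℝ) * 2^((-(k:ℝ))*((n:ℕ):ℝ)) := by
        rw [Real.mul_rpow hδ.le (Real.rpow_nonneg h2.le _), ← Real.rpow_mul h2.le]
      have e3 : ((2:ℝ)^(-α))^k = (2:ℝ)^((-α)*(k:ℝ)) := by
        rw [← Real.rpow_natCast ((2:ℝ)^(-α)) k, ← Real.rpow_mul h2.le]
      rw [e1, e2, e3]
      calc δ^(α-(n:ℝ)) * 2^((-(k:ℝ)-1)*(α-(n:ℝ))) * (δ^((n:ℕ):ℝ) * 2^((-(k:ℝ))*((n:ℕ):ℝ)))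
          = (δ^(α-(n:ℝ)) * δ^((n:ℕ):ℝ)) *
              ((2:ℝ)^((-(k:ℝ)-1)*(α-(n:ℝ))) * 2^((-(k:ℝ))*((n:ℕ):ℝ))) := by ring
        _ = δ^((α-(n:ℝ)) + ((n:ℕ):ℝ)) *
              (2:ℝ)^((-(k:ℝ)-1)*(α-(n:ℝ)) + (-(k:ℝ))*((n:ℕ):ℝ)) := by
            rw [← Real.rpow_add hδ, ← Real.rpow_add h2]
        _ = δ^α * (2:ℝ)^(((n:ℝ)-α) + (-α)*(k:ℝ)) := by
            rw [show (α-(n:ℝ)) + ((n:ℕ):ℝ) = α by push_cast; ring,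
              show (-(k:ℝ)-1)*(α-(n:ℝ)) + (-(k:ℝ))*((n:ℕ):ℝ) = ((n:ℝ)-α) + (-α)*(k:ℝ) by
                push_cast; ring]
        _ = (2:ℝ)^((n:ℝ)-α) * δ^α * (2:ℝ)^((-α)*(k:ℝ)) := by
            rw [Real.rpow_add h2]; ring
    rw [key, ENNReal.ofReal_mul (by positivity), ENNReal.ofReal_pow (Real.rpow_nonneg h2.le _)]
    ring
  have hρ : (2:ℝ)^(-α) < 1 := Real.rpow_lt_one_of_one_lt_of_neg one_lt_two (by linarith)
  have hρ0 : (0:ℝ) < (2:ℝ)^(-α) := Real.rpow_pos_of_pos h2 _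
  calc ∫⁻ x in {x | ‖x - y‖ < δ}, ENNReal.ofReal (‖x - y‖ ^ (α - (n:ℝ)))
      ≤ ∫⁻ x in ({y} : Set (EuclideanSpace ℝ (Fin n))) ∪ ⋃ k, A k,
          ENNReal.ofReal (‖x - y‖ ^ (α - (n:ℝ))) := lintegral_mono_set hcover
    _ ≤ (∫⁻ x in ({y} : Set (EuclideanSpace ℝ (Fin n))),
          ENNReal.ofReal (‖x - y‖ ^ (α - (n:ℝ)))) +
        ∫⁻ x in ⋃ k, A k, ENNReal.ofReal (‖x - y‖ ^ (α - (n:ℝ))) := lintegral_union_le _ _ _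
    _ = ∫⁻ x in ⋃ k, A k, ENNReal.ofReal (‖x - y‖ ^ (α - (n:ℝ))) := by rw [hsing, zero_add]
    _ ≤ ∑' k, ∫⁻ x in A k, ENNReal.ofReal (‖x - y‖ ^ (α - (n:ℝ))) := lintegral_iUnion_le _ _
    _ ≤ ∑' k, (ENNReal.ofReal ((2:ℝ)^((n:ℝ)-α) * δ^α) *
          volume (ball (0 : EuclideanSpace ℝ (Fin n)) 1)) * (ENNReal.ofReal ((2:ℝ)^(-α)))^k :=
        ENNReal.tsum_le_tsum hterm
    _ = (ENNReal.ofReal ((2:ℝ)^((n:ℝ)-α) * δ^α) *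
          volume (ball (0 : EuclideanSpace ℝ (Fin n)) 1)) *
            ∑' k, (ENNReal.ofReal ((2:ℝ)^(-α)))^k := ENNReal.tsum_mul_left
    _ = (ENNReal.ofReal ((2:ℝ)^((n:ℝ)-α) * δ^α) *
          volume (ball (0 : EuclideanSpace ℝ (Fin n)) 1)) *
            (1 - ENNReal.ofReal ((2:ℝ)^(-α)))⁻¹ := by rw [ENNReal.tsum_geometric]
    _ = ENNReal.ofReal ((2:ℝ)^((n:ℝ)-α) * (1 - (2:ℝ)^(-α))⁻¹ * δ^α) *
          volume (ball (0 : EuclideanSpace ℝ (Fin n)) 1) := by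
        rw [show (1:ℝ≥0∞) - ENNReal.ofReal ((2:ℝ)^(-α)) = ENNReal.ofReal (1 - (2:ℝ)^(-α)) by
            rw [← ENNReal.ofReal_one, ← ENNReal.ofReal_sub _ hρ0.le],
          ← ENNReal.ofReal_inv_of_pos (by linarith),
          show (2:ℝ)^((n:ℝ)-α) * (1 - (2:ℝ)^(-α))⁻¹ * δ^α
            = ((2:ℝ)^((n:ℝ)-α) * δ^α) * (1 - (2:ℝ)^(-α))⁻¹ by ring,
          ENNReal.ofReal_mul (by positivity), ENNReal.ofReal_mul (by positivity),
          ENNReal.ofReal_mul (by positivity)]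
        ring

lemma near_bound (hf : Measurable f) (hα0 : 0 < α) (hαn : α - (n:ℝ) < 0) {M : ℝ≥0∞}
    (hMor : ∀ x r, 0 < r →
      ∫⁻ y in ball x r, ENNReal.ofReal |f y| ≤ ENNReal.ofReal (r ^ lam) * M)
    (x0 : EuclideanSpace ℝ (Fin n)) {r δ : ℝ} (hr : 0 < r) (hδ : 0 < δ) :
    ∫⁻ x in ball x0 r, ∫⁻ y in {y | ‖x - y‖ < δ}, rkern n α f x y
      ≤ (ENNReal.ofReal ((2:ℝ)^((n:ℝ)-α) * (1 - (2:ℝ)^(-α))⁻¹ * δ^α) *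
          volume (ball (0 : EuclideanSpace ℝ (Fin n)) 1)) *
        (ENNReal.ofReal ((r + δ) ^ lam) * M) := by
  classical
  set Kc : ℝ≥0∞ := ENNReal.ofReal ((2:ℝ)^((n:ℝ)-α) * (1 - (2:ℝ)^(-α))⁻¹ * δ^α) *
      volume (ball (0 : EuclideanSpace ℝ (Fin n)) 1) with hKc
  set F : EuclideanSpace ℝ (Fin n) × EuclideanSpace ℝ (Fin n) → ℝ≥0∞ :=
    fun p => if p.1 ∈ ball x0 r ∧ ‖p.1 - p.2‖ < δ then rkern n α f p.1 p.2 else 0 with hF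
  have hFmeas : Measurable F := by
    apply Measurable.ite ?_ (measurable_rkern hf (ne_of_lt hαn)) measurable_const
    have h1 : MeasurableSet {p : EuclideanSpace ℝ (Fin n) × EuclideanSpace ℝ (Fin n) |
        p.1 ∈ ball x0 r} := measurable_fst measurableSet_ball
    have h2 : MeasurableSet {p : EuclideanSpace ℝ (Fin n) × EuclideanSpace ℝ (Fin n) |
        ‖p.1 - p.2‖ < δ} :=
      measurableSet_lt ((measurable_fst.sub measurable_snd).norm) measurable_const
    exact h1.inter h2
  have hmb : ∀ x : EuclideanSpace ℝ (Fin n),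
      MeasurableSet {y : EuclideanSpace ℝ (Fin n) | ‖x - y‖ < δ} := fun x =>
    measurableSet_lt ((measurable_const.sub measurable_id').norm) measurable_const
  have hmb2 : ∀ y : EuclideanSpace ℝ (Fin n),
      MeasurableSet {x : EuclideanSpace ℝ (Fin n) | ‖x - y‖ < δ} := fun y =>
    measurableSet_lt ((measurable_id'.sub measurable_const).norm) measurable_const
  have step1 : ∫⁻ x in ball x0 r, ∫⁻ y in {y | ‖x - y‖ < δ}, rkern n α f x y
      = ∫⁻ x, ∫⁻ y, F (x, y) := by
    rw [← lintegral_indicator measurableSet_ball]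
    congr 1
    funext x
    by_cases hx : x ∈ ball x0 r
    · rw [indicator_of_mem hx, ← lintegral_indicator (hmb x)]
      congr 1
      funext y
      by_cases hy : ‖x - y‖ < δ
      · rw [Set.indicator_of_mem (show y ∈ {y | ‖x - y‖ < δ} from hy)]
        rw [hF]
        exact (if_pos ⟨hx, hy⟩).symm
      · rw [Set.indicator_of_notMem (show y ∉ {y | ‖x - y‖ < δ} from hy)]
        rw [hF]
        exact (if_neg (fun h => hy h.2)).symm
    · rw [indicator_of_notMem hx]
      symm
      simp only [hF, hx, false_and, if_false]
      exact lintegral_zero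
  have step2 : ∫⁻ x, ∫⁻ y, F (x, y) = ∫⁻ y, ∫⁻ x, F (x, y) := by
    have hu : Function.uncurry (fun x y => F (x, y)) = F := by
      funext p; simp [Function.uncurry]
    exact lintegral_lintegral_swap (by rw [hu]; exact hFmeas.aemeasurable)
  have step3 : ∀ y : EuclideanSpace ℝ (Fin n), ∫⁻ x, F (x, y) ≤
      (ball x0 (r + δ)).indicator (fun y => Kc * ENNReal.ofReal |f y|) y := by
    intro y
    by_cases hy : y ∈ ball x0 (r + δ)
    · rw [indicator_of_mem hy]
      have hpt : ∀ x, F (x, y) ≤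
          ({x : EuclideanSpace ℝ (Fin n) | ‖x - y‖ < δ}).indicator
            (fun x => ENNReal.ofReal (‖x - y‖ ^ (α - (n:ℝ)))) x * ENNReal.ofReal |f y| := by
        intro x
        by_cases hc : x ∈ ball x0 r ∧ ‖x - y‖ < δ
        · have h1 : F (x, y) = rkern n α f x y := by rw [hF]; exact if_pos hc
          rw [h1, Set.indicator_of_mem (show x ∈ {x | ‖x - y‖ < δ} from hc.2), rkern,
            ← ENNReal.ofReal_mul (Real.rpow_nonneg (norm_nonneg _) _)]
        · have h1 : F (x, y) = 0 := by rw [hF]; exact if_neg hc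
          rw [h1]; exact zero_le
      calc ∫⁻ x, F (x, y)
          ≤ ∫⁻ x, ({x : EuclideanSpace ℝ (Fin n) | ‖x - y‖ < δ}).indicator
              (fun x => ENNReal.ofReal (‖x - y‖ ^ (α - (n:ℝ)))) x * ENNReal.ofReal |f y| :=
            lintegral_mono hpt
        _ = (∫⁻ x in {x : EuclideanSpace ℝ (Fin n) | ‖x - y‖ < δ},
              ENNReal.ofReal (‖x - y‖ ^ (α - (n:ℝ)))) * ENNReal.ofReal |f y| := by
            rw [lintegral_mul_const' _ _ ENNReal.ofReal_ne_top,
              lintegral_indicator (hmb2 y)]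
        _ ≤ Kc * ENNReal.ofReal |f y| :=
            mul_le_mul_left (K_bound hα0 hαn y hδ) _
    · rw [indicator_of_notMem hy]
      have : ∀ x, F (x, y) = 0 := by
        intro x
        rw [hF]
        simp only
        rw [if_neg]
        rintro ⟨hx1, hx2⟩
        apply hy
        have : dist y x0 < r + δ := by
          calc dist y x0 ≤ dist y x + dist x x0 := dist_triangle _ _ _
            _ < δ + r := by
                rw [mem_ball] at hx1
                have hd : dist y x = ‖x - y‖ := by rw [dist_eq_norm, norm_sub_rev]
                linarith [hd ▸ hx2]
            _ = r + δ := by ring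
        exact mem_ball.mpr this
      simp [this]
  calc ∫⁻ x in ball x0 r, ∫⁻ y in {y | ‖x - y‖ < δ}, rkern n α f x y
      = ∫⁻ y, ∫⁻ x, F (x, y) := by rw [step1, step2]
    _ ≤ ∫⁻ y, (ball x0 (r + δ)).indicator (fun y => Kc * ENNReal.ofReal |f y|) y :=
        lintegral_mono step3
    _ = ∫⁻ y in ball x0 (r + δ), Kc * ENNReal.ofReal |f y| :=
        lintegral_indicator measurableSet_ball _
    _ = Kc * ∫⁻ y in ball x0 (r + δ), ENNReal.ofReal |f y| :=
        lintegral_const_mul' _ _ (by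
          rw [hKc]
          exact ENNReal.mul_ne_top ENNReal.ofReal_ne_top measure_ball_lt_top.ne)
    _ ≤ Kc * (ENNReal.ofReal ((r + δ) ^ lam) * M) :=
        mul_le_mul_right (hMor x0 (r + δ) (by linarith)) _

lemma morrey_extract (x : EuclideanSpace ℝ (Fin n)) {r : ℝ} (hr : 0 < r) :
    ∫⁻ y in ball x r, ENNReal.ofReal |f y|
      ≤ ENNReal.ofReal (r ^ lam) * morreyNorm 1 lam Set.univ f := by
  have h1 : eLpNorm ((ball x r ∩ univ).indicator f) (ENNReal.ofReal 1) volume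
      = ∫⁻ y in ball x r, ENNReal.ofReal |f y| := by
    rw [ENNReal.ofReal_one, eLpNorm_one_eq_lintegral_enorm, inter_univ,
      ← lintegral_indicator measurableSet_ball]
    congr 1
    funext y
    by_cases hy : y ∈ ball x r
    · simp [Set.indicator_of_mem hy, Real.enorm_eq_ofReal_abs]
    · simp [Set.indicator_of_notMem hy]
  have h2 : ENNReal.ofReal (r ^ (-(lam / 1))) *
      eLpNorm ((ball x r ∩ univ).indicator f) (ENNReal.ofReal 1) volume
        ≤ morreyNorm 1 lam Set.univ f := by
    rw [morreyNorm]
    refine le_trans ?_ (le_iSup _ x)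
    refine le_trans ?_ (le_iSup _ r)
    exact le_iSup_of_le hr (le_refl _)
  have hpos : (0:ℝ) < r ^ lam := Real.rpow_pos_of_pos hr lam
  have key : ENNReal.ofReal (r ^ lam) * ENNReal.ofReal (r ^ (-(lam / 1))) = 1 := by
    rw [← ENNReal.ofReal_mul hpos.le, ← Real.rpow_add hr]
    norm_num
  calc ∫⁻ y in ball x r, ENNReal.ofReal |f y|
      = 1 * ∫⁻ y in ball x r, ENNReal.ofReal |f y| := (one_mul _).symm
    _ = ENNReal.ofReal (r ^ lam) * (ENNReal.ofReal (r ^ (-(lam / 1))) *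
          ∫⁻ y in ball x r, ENNReal.ofReal |f y|) := by rw [← mul_assoc, key]
    _ = ENNReal.ofReal (r ^ lam) * (ENNReal.ofReal (r ^ (-(lam / 1))) *
          eLpNorm ((ball x r ∩ univ).indicator f) (ENNReal.ofReal 1) volume) := by rw [h1]
    _ ≤ ENNReal.ofReal (r ^ lam) * morreyNorm 1 lam Set.univ f := mul_le_mul_right h2 _

lemma measurable_Gnear (hf : Measurable f) (hαn : α - (n:ℝ) ≠ 0) (δ : ℝ) :
    Measurable fun x => ∫⁻ y in {y | ‖x - y‖ < δ}, rkern n α f x y := by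
  have hmb : ∀ x : EuclideanSpace ℝ (Fin n),
      MeasurableSet {y : EuclideanSpace ℝ (Fin n) | ‖x - y‖ < δ} := fun x =>
    measurableSet_lt ((measurable_const.sub measurable_id').norm) measurable_const
  set F : EuclideanSpace ℝ (Fin n) × EuclideanSpace ℝ (Fin n) → ℝ≥0∞ :=
    fun p => if ‖p.1 - p.2‖ < δ then rkern n α f p.1 p.2 else 0 with hFdef
  have hFm : Measurable F := Measurable.ite
    (measurableSet_lt ((measurable_fst.sub measurable_snd).norm) measurable_const)
    (measurable_rkern hf hαn) measurable_const
  have heq : (fun x => ∫⁻ y in {y | ‖x - y‖ < δ}, rkern n α f x y)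
      = fun x => ∫⁻ y, F (x, y) := by
    funext x
    rw [← lintegral_indicator (hmb x)]
    rfl
  rw [heq]
  exact hFm.lintegral_prod_right'

lemma caseA_calc {c1 c4 m t βp αp : ℝ} (hc1 : 0 < c1) (hc4 : 0 ≤ c4) (hm : 0 < m)
    (ht : 0 < t) (hβ : 0 < βp) (hα : 0 < αp) :
    t * (c4 * (((2*c1*m/t) ^ βp⁻¹) ^ αp * m / t)) ^ (βp/(βp+αp))
      = (2*c1) ^ (1 - βp/(βp+αp)) * c4 ^ (βp/(βp+αp)) * m := by
  have hX : (0:ℝ) < 2*c1*m/t := by positivity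
  have hq : (0:ℝ) < (βp+αp)/βp := by positivity
  have hiq : βp/(βp+αp) = ((βp+αp)/βp)⁻¹ := by rw [inv_div]
  have h1 : ((2*c1*m/t) ^ βp⁻¹) ^ αp = (2*c1*m/t) ^ (αp/βp) := by
    rw [← Real.rpow_mul hX.le, inv_mul_eq_div]
  have h2 : (2*c1*m/t) ^ (αp/βp) * m / t = (2*c1*m/t) ^ ((βp+αp)/βp) / (2*c1) := by
    have hmt : m / t = (2*c1*m/t) / (2*c1) := by field_simp
    rw [mul_div_assoc, hmt, ← mul_div_assoc, ← Real.rpow_add_one hX.ne']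
    rw [show αp/βp + 1 = (βp+αp)/βp by field_simp; ring]
  rw [h1, h2, hiq]
  rw [Real.mul_rpow hc4 (by positivity),
    Real.div_rpow (Real.rpow_nonneg hX.le _) (by positivity),
    Real.rpow_rpow_inv hX.le (by positivity : (βp+αp)/βp ≠ 0)]
  have hfin : (2*c1) ^ (1 - ((βp+αp)/βp)⁻¹)
      = (2*c1) / (2*c1) ^ (((βp+αp)/βp)⁻¹) := by
    rw [Real.rpow_sub (by positivity), Real.rpow_one]
  rw [hfin]
  have hA : (2*c1) ^ (((βp+αp)/βp)⁻¹) ≠ 0 := by positivity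
  field_simp

end AdamsAux

open AdamsAux Set

set_option maxHeartbeats 1000000 in
/-- (Adams, weak endpoint) For `0 ≤ λ < n` and `0 < α < n - λ`, the Riesz potential `I_α` is
bounded from `M^{1,λ}(ℝⁿ)` to the weak Morrey space `M_*^{(n-λ)/(n-λ-α),λ}(ℝⁿ)`. -/
theorem adams_riesz_weak_morrey (n : ℕ) (α lam : ℝ) (hn : 0 < n)
    (hl1 : 0 ≤ lam) (hl2 : lam < n) (hα1 : 0 < α) (hα2 : α < (n : ℝ) - lam) :
    ∃ C : ℝ, 0 < C ∧ ∀ f : EuclideanSpace ℝ (Fin n) → ℝ, Measurable f →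
      weakMorreyNorm (((n : ℝ) - lam) / ((n : ℝ) - lam - α)) lam Set.univ
          (rieszPotential α f) ≤
        ENNReal.ofReal C * morreyNorm 1 lam Set.univ f := by
  classical
  set β : ℝ := (n:ℝ) - lam - α with hβdef
  have hβ : 0 < β := by rw [hβdef]; linarith
  have hnl : 0 < (n:ℝ) - lam := by linarith
  set q : ℝ := ((n:ℝ) - lam) / β with hqdef
  have hnlβ : (n:ℝ) - lam = β + α := by rw [hβdef]; ring
  have hq : q = (β + α)/β := by rw [hqdef, hnlβ]
  have hqpos : 0 < q := by rw [hq]; positivity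
  have h1q : 1/q = β/(β+α) := by rw [hq, one_div, inv_div]
  have h1qpos : 0 < 1/q := by rw [h1q]; positivity
  have hαn : α - (n:ℝ) < 0 := by linarith
  have hαlamn : α + lam - (n:ℝ) < 0 := by linarith
  have h2 : (0:ℝ) < 2 := two_pos
  set c1 : ℝ := (2:ℝ)^lam * (1 - (2:ℝ)^(α+lam-(n:ℝ)))⁻¹ with hc1def
  have hρ1 : (2:ℝ)^(α+lam-(n:ℝ)) < 1 := Real.rpow_lt_one_of_one_lt_of_neg one_lt_two hαlamn
  have hc1 : 0 < c1 := by
    rw [hc1def]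
    have h2l : (0:ℝ) < (2:ℝ)^lam := Real.rpow_pos_of_pos h2 lam
    have h2i : (0:ℝ) < 1 - (2:ℝ)^(α+lam-(n:ℝ)) := by linarith
    positivity
  set c2 : ℝ := (2:ℝ)^((n:ℝ)-α) * (1 - (2:ℝ)^(-α))⁻¹ with hc2def
  have hρ2 : (2:ℝ)^(-α:ℝ) < 1 := Real.rpow_lt_one_of_one_lt_of_neg one_lt_two (by linarith)
  have hc2 : 0 < c2 := by
    rw [hc2def]
    have h2l : (0:ℝ) < (2:ℝ)^((n:ℝ)-α) := Real.rpow_pos_of_pos h2 _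
    have h2i : (0:ℝ) < 1 - (2:ℝ)^(-α:ℝ) := by linarith
    positivity
  set v : ℝ := (volume (ball (0 : EuclideanSpace ℝ (Fin n)) 1)).toReal with hvdef
  have hv : 0 ≤ v := ENNReal.toReal_nonneg
  have hV : volume (ball (0 : EuclideanSpace ℝ (Fin n)) 1) = ENNReal.ofReal v :=
    (ENNReal.ofReal_toReal measure_ball_lt_top.ne).symm
  set c4 : ℝ := (2:ℝ)^(1+lam) * c2 * v with hc4def
  have hc4 : 0 ≤ c4 := by
    rw [hc4def]
    have h2l : (0:ℝ) < (2:ℝ)^(1+lam) := Real.rpow_pos_of_pos h2 _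
    exact mul_nonneg (mul_nonneg h2l.le hc2.le) hv
  set C : ℝ := (2*c1)^(1-1/q) * c4^(1/q) + 2*c1*v^(1/q) + 1 with hCdef
  have hCpart1 : 0 ≤ (2*c1)^(1-1/q) * c4^(1/q) :=
    mul_nonneg (Real.rpow_nonneg (by linarith) _) (Real.rpow_nonneg hc4 _)
  have hCpart2 : 0 ≤ 2*c1*v^(1/q) :=
    mul_nonneg (by linarith) (Real.rpow_nonneg hv _)
  have hC : 0 < C := by rw [hCdef]; linarith
  refine ⟨C, hC, ?_⟩
  intro f hf
  set M := morreyNorm 1 lam Set.univ f with hMdef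
  have hMor : ∀ x r, 0 < r → ∫⁻ y in ball x r, ENNReal.ofReal |f y|
      ≤ ENNReal.ofReal (r ^ lam) * M := fun x r hr => morrey_extract x hr
  have hIG : ∀ x, rieszPotential α f x = (∫⁻ y, rkern n α f x y).toReal := by
    intro x
    simp only [rieszPotential, rkern]
  by_cases hMtop : M = ⊤
  · rw [hMtop, ENNReal.mul_top (by
      simpa using (ENNReal.ofReal_pos.mpr hC).ne')]
    exact le_top
  rw [weakMorreyNorm]
  refine iSup_le fun x0 => iSup_le fun r => iSup_le fun hr => ?_
  rw [weakLpOn, ENNReal.mul_iSup]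
  refine iSup_le fun t => ?_
  rw [ENNReal.mul_iSup]
  refine iSup_le fun ht => ?_
  simp only [inter_univ]
  by_cases hM0 : M = 0
  · -- `f` vanishes a.e., so the Riesz potential is identically zero
    have hball : ∀ k : ℕ, ∫⁻ y in ball (0 : EuclideanSpace ℝ (Fin n)) ((k:ℝ)+1),
        ENNReal.ofReal |f y| = 0 := by
      intro k
      refine le_antisymm ?_ zero_le
      have h := hMor 0 ((k:ℝ)+1) (by positivity)
      simpa [hM0] using h
    have htot : ∫⁻ y, ENNReal.ofReal |f y| = 0 := by
      have huniv : (univ : Set (EuclideanSpace ℝ (Fin n))) =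
          ⋃ k : ℕ, ball (0 : EuclideanSpace ℝ (Fin n)) ((k:ℝ)+1) := by
        ext y
        simp only [mem_univ, mem_iUnion, mem_ball, true_iff]
        obtain ⟨k, hk⟩ := exists_nat_gt (dist y 0)
        exact ⟨k, by linarith⟩
      refine le_antisymm ?_ zero_le
      calc ∫⁻ y, ENNReal.ofReal |f y| = ∫⁻ y in univ, ENNReal.ofReal |f y| :=
            (setLIntegral_univ _).symm
        _ = ∫⁻ y in ⋃ k : ℕ, ball (0 : EuclideanSpace ℝ (Fin n)) ((k:ℝ)+1),
              ENNReal.ofReal |f y| := by rw [← huniv]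
        _ ≤ ∑' k : ℕ, ∫⁻ y in ball (0 : EuclideanSpace ℝ (Fin n)) ((k:ℝ)+1),
              ENNReal.ofReal |f y| := lintegral_iUnion_le _ _
        _ = 0 := by simp [hball]
    have hae : (fun y => ENNReal.ofReal |f y|) =ᵐ[volume] 0 :=
      (lintegral_eq_zero_iff (hf.abs.ennreal_ofReal)).mp htot
    have hG0 : ∀ x, (∫⁻ y, rkern n α f x y) = 0 := by
      intro x
      have hz : (fun y => rkern n α f x y) =ᵐ[volume] 0 := by
        filter_upwards [hae] with y hy
        have hy0 : |f y| = 0 := by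
          have h1 := ENNReal.ofReal_eq_zero.mp hy
          exact le_antisymm h1 (abs_nonneg _)
        simp [rkern, hy0]
      rw [lintegral_congr_ae hz]
      simp
    have hempty : {x ∈ ball x0 r | t < |rieszPotential α f x|} = ∅ := by
      ext x
      simp only [mem_sep_iff, mem_empty_iff_false, iff_false, not_and]
      intro _
      rw [hIG x, hG0 x]
      simp only [ENNReal.toReal_zero, abs_zero, not_lt]
      linarith
    rw [hempty, measure_empty, ENNReal.zero_rpow_of_pos h1qpos, mul_zero, mul_zero]
    exact zero_le
  -- main case : 0 < M < ∞
  have hm : 0 < M.toReal := ENNReal.toReal_pos hM0 hMtop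
  set m : ℝ := M.toReal with hmdef
  have hMm : M = ENNReal.ofReal m := (ENNReal.ofReal_toReal hMtop).symm
  set δ : ℝ := (2*c1*m/t) ^ β⁻¹ with hδdef
  have hδ : 0 < δ := Real.rpow_pos_of_pos (by positivity) _
  have hδβ : δ ^ β = 2*c1*m/t := Real.rpow_inv_rpow (by positivity) hβ.ne'
  have hmb : ∀ x : EuclideanSpace ℝ (Fin n),
      MeasurableSet {y : EuclideanSpace ℝ (Fin n) | ‖x - y‖ < δ} := fun x =>
    measurableSet_lt ((measurable_const.sub measurable_id').norm) measurable_const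
  set Gnear : EuclideanSpace ℝ (Fin n) → ℝ≥0∞ :=
    fun x => ∫⁻ y in {y | ‖x - y‖ < δ}, rkern n α f x y with hGneardef
  have hGnearMeas : Measurable Gnear := measurable_Gnear hf hαn.ne δ
  have hfar : ∀ x, ∫⁻ y in {y | δ ≤ ‖x - y‖}, rkern n α f x y ≤ ENNReal.ofReal (t/2) := by
    intro x
    refine (far_bound hαn.le hMor hαlamn x hδ).trans ?_
    rw [← hc1def, hMm, ← ENNReal.ofReal_mul
      (mul_nonneg hc1.le (Real.rpow_nonneg hδ.le _))]
    apply ENNReal.ofReal_le_ofReal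
    rw [show α + lam - (n:ℝ) = -β by rw [hβdef]; ring, Real.rpow_neg hδ.le, hδβ, inv_div]
    refine le_of_eq ?_
    field_simp
  have hincl : {x ∈ ball x0 r | t < |rieszPotential α f x|}
      ⊆ {x | ENNReal.ofReal (t/2) < Gnear x} ∩ ball x0 r := by
    rintro x ⟨hxB, hxt⟩
    refine ⟨?_, hxB⟩
    have habs : |rieszPotential α f x| = rieszPotential α f x :=
      abs_of_nonneg (by rw [hIG x]; exact ENNReal.toReal_nonneg)
    rw [habs, hIG x] at hxt
    have hne : (∫⁻ y, rkern n α f x y) ≠ ⊤ := by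
      intro htop
      rw [htop] at hxt
      simp only [ENNReal.toReal_top] at hxt
      linarith
    have hG : ENNReal.ofReal t < ∫⁻ y, rkern n α f x y :=
      (ENNReal.ofReal_lt_iff_lt_toReal ht.le hne).mpr hxt
    have hsplit : (∫⁻ y, rkern n α f x y)
        = Gnear x + ∫⁻ y in {y : EuclideanSpace ℝ (Fin n) | ‖x - y‖ < δ}ᶜ,
            rkern n α f x y := (lintegral_add_compl _ (hmb x)).symm
    have hcompl : ({y : EuclideanSpace ℝ (Fin n) | ‖x - y‖ < δ})ᶜ
        = {y | δ ≤ ‖x - y‖} := by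
      ext y; simp [not_lt]
    have h2' : ENNReal.ofReal t < Gnear x + ENNReal.ofReal (t/2) := by
      refine lt_of_lt_of_le hG ?_
      rw [hsplit, hcompl]
      exact add_le_add_right (hfar x) _
    have hto : ENNReal.ofReal t = ENNReal.ofReal (t/2) + ENNReal.ofReal (t/2) := by
      rw [← ENNReal.ofReal_add (by linarith) (by linarith)]
      norm_num
    rw [hto] at h2'
    exact lt_of_add_lt_add_right h2'
  have hcheb : volume ({x | ENNReal.ofReal (t/2) < Gnear x} ∩ ball x0 r)
      ≤ (∫⁻ x in ball x0 r, Gnear x) / ENNReal.ofReal (t/2) := by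
    have hsetm : MeasurableSet {x | ENNReal.ofReal (t/2) < Gnear x} :=
      measurableSet_lt measurable_const hGnearMeas
    rw [← Measure.restrict_apply hsetm]
    have hsub : {x | ENNReal.ofReal (t/2) < Gnear x}
        ⊆ {x | ENNReal.ofReal (t/2) ≤ Gnear x} := fun x hx =>
      le_of_lt (show ENNReal.ofReal (t/2) < Gnear x from hx)
    refine le_trans (measure_mono hsub) ?_
    exact meas_ge_le_lintegral_div hGnearMeas.aemeasurable
      ((ENNReal.ofReal_pos.mpr (by linarith)).ne') ENNReal.ofReal_ne_top
  have hnear' : ∫⁻ x in ball x0 r, Gnear x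
      ≤ ENNReal.ofReal ((c2 * δ^α * v) * ((r+δ)^lam * m)) := by
    have hnb := near_bound hf hα1 hαn hMor x0 hr hδ
    rw [← hc2def, hV, hMm] at hnb
    refine hnb.trans (le_of_eq ?_)
    rw [← ENNReal.ofReal_mul (mul_nonneg hc2.le (Real.rpow_nonneg hδ.le _)),
      ← ENNReal.ofReal_mul (Real.rpow_nonneg (by linarith) _),
      ← ENNReal.ofReal_mul (mul_nonneg (mul_nonneg hc2.le (Real.rpow_nonneg hδ.le _)) hv)]
  rcases le_or_gt δ r with hcase | hcase
  · -- Case A : δ ≤ r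
    have hP : 0 ≤ c4 * (δ^α * m / t) :=
      mul_nonneg hc4 (div_nonneg (mul_nonneg (Real.rpow_nonneg hδ.le _) hm.le) ht.le)
    have hvolA : volume {x ∈ ball x0 r | t < |rieszPotential α f x|}
        ≤ ENNReal.ofReal (c4 * (δ^α * m / t) * r^lam) := by
      calc volume {x ∈ ball x0 r | t < |rieszPotential α f x|}
          ≤ volume ({x | ENNReal.ofReal (t/2) < Gnear x} ∩ ball x0 r) :=
            measure_mono hincl
        _ ≤ (∫⁻ x in ball x0 r, Gnear x) / ENNReal.ofReal (t/2) := hcheb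
        _ ≤ ENNReal.ofReal ((c2 * δ^α * v) * ((r+δ)^lam * m)) / ENNReal.ofReal (t/2) :=
            ENNReal.div_le_div_right hnear' _
        _ ≤ ENNReal.ofReal ((c2 * δ^α * v) * ((2*r)^lam * m)) / ENNReal.ofReal (t/2) := by
            refine ENNReal.div_le_div_right (ENNReal.ofReal_le_ofReal ?_) _
            have h2r : (r+δ)^lam ≤ (2*r)^lam :=
              Real.rpow_le_rpow (by linarith) (by linarith) hl1
            exact mul_le_mul_of_nonneg_left
              (mul_le_mul_of_nonneg_right h2r hm.le)
              (mul_nonneg (mul_nonneg hc2.le (Real.rpow_nonneg hδ.le _)) hv)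
        _ = ENNReal.ofReal (c4 * (δ^α * m / t) * r^lam) := by
            rw [← ENNReal.ofReal_div_of_pos (by linarith)]
            congr 1
            have hsplit2r : (2*r)^lam = 2^lam * r^lam :=
              Real.mul_rpow (by norm_num) hr.le
            have h2pow : (2:ℝ)^(1+lam) = 2 * (2:ℝ)^lam := by
              rw [Real.rpow_add h2, Real.rpow_one]
            rw [hc4def, hsplit2r, h2pow]
            field_simp
    have hcalc := caseA_calc (c4 := c4) hc1 hc4 hm ht hβ hα1
    rw [← h1q, ← hδdef] at hcalc
    calc ENNReal.ofReal (r ^ (-(lam / q))) * (ENNReal.ofReal t *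
          volume {x ∈ ball x0 r | t < |rieszPotential α f x|} ^ (1/q))
        ≤ ENNReal.ofReal (r ^ (-(lam / q))) * (ENNReal.ofReal t *
            (ENNReal.ofReal (c4 * (δ^α * m / t) * r^lam)) ^ (1/q)) :=
          mul_le_mul_right (mul_le_mul_right
            (ENNReal.rpow_le_rpow hvolA h1qpos.le) _) _
      _ = ENNReal.ofReal (r ^ (-(lam / q)) * (t * (c4 * (δ^α * m / t) * r^lam) ^ (1/q))) := by
          rw [ENNReal.ofReal_rpow_of_nonneg (mul_nonneg hP (Real.rpow_nonneg hr.le _))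
              h1qpos.le,
            ← ENNReal.ofReal_mul ht.le,
            ← ENNReal.ofReal_mul (Real.rpow_nonneg hr.le _)]
      _ ≤ ENNReal.ofReal (C * m) := by
          apply ENNReal.ofReal_le_ofReal
          have hsplitP : (c4 * (δ^α * m / t) * r^lam) ^ (1/q)
              = (c4 * (δ^α * m / t)) ^ (1/q) * (r^lam) ^ (1/q) :=
            Real.mul_rpow hP (Real.rpow_nonneg hr.le _)
          have hrpow : (r^lam) ^ (1/q) = r ^ (lam * (1/q)) :=
            (Real.rpow_mul hr.le _ _).symm
          have hcancel : r ^ (-(lam/q)) * r ^ (lam * (1/q)) = 1 := by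
            rw [← Real.rpow_add hr,
              show -(lam/q) + lam * (1/q) = 0 by rw [mul_one_div]; ring,
              Real.rpow_zero]
          calc r ^ (-(lam / q)) * (t * (c4 * (δ^α * m / t) * r^lam) ^ (1/q))
              = (r ^ (-(lam/q)) * r ^ (lam * (1/q))) *
                  (t * (c4 * (δ^α * m / t)) ^ (1/q)) := by
                rw [hsplitP, hrpow]; ring
            _ = t * (c4 * (δ^α * m / t)) ^ (1/q) := by rw [hcancel, one_mul]
            _ = (2*c1) ^ (1 - 1/q) * c4 ^ (1/q) * m := hcalc
            _ ≤ C * m := by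
                refine mul_le_mul_of_nonneg_right ?_ hm.le
                rw [hCdef]
                linarith
      _ = ENNReal.ofReal C * M := by
          rw [hMm, ENNReal.ofReal_mul hC.le]
  · -- Case B : r < δ
    have hvolB : volume {x ∈ ball x0 r | t < |rieszPotential α f x|}
        ≤ ENNReal.ofReal (r ^ ((n:ℕ):ℝ) * v) := by
      calc volume {x ∈ ball x0 r | t < |rieszPotential α f x|}
          ≤ volume (closedBall x0 r) :=
            measure_mono (subset_trans (sep_subset _ _) ball_subset_closedBall)
        _ = ENNReal.ofReal (r ^ ((n:ℕ):ℝ) * v) := by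
            rw [Measure.addHaar_closedBall _ _ hr.le, finrank_euclideanSpace_fin, hV,
              ← Real.rpow_natCast r n,
              ← ENNReal.ofReal_mul (Real.rpow_nonneg hr.le _)]
    have hPB : 0 ≤ r ^ ((n:ℕ):ℝ) * v := mul_nonneg (Real.rpow_nonneg hr.le _) hv
    calc ENNReal.ofReal (r ^ (-(lam / q))) * (ENNReal.ofReal t *
          volume {x ∈ ball x0 r | t < |rieszPotential α f x|} ^ (1/q))
        ≤ ENNReal.ofReal (r ^ (-(lam / q))) * (ENNReal.ofReal t *
            (ENNReal.ofReal (r ^ ((n:ℕ):ℝ) * v)) ^ (1/q)) :=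
          mul_le_mul_right (mul_le_mul_right
            (ENNReal.rpow_le_rpow hvolB h1qpos.le) _) _
      _ = ENNReal.ofReal (r ^ (-(lam / q)) * (t * (r ^ ((n:ℕ):ℝ) * v) ^ (1/q))) := by
          rw [ENNReal.ofReal_rpow_of_nonneg hPB h1qpos.le,
            ← ENNReal.ofReal_mul ht.le,
            ← ENNReal.ofReal_mul (Real.rpow_nonneg hr.le _)]
      _ ≤ ENNReal.ofReal (C * m) := by
          apply ENNReal.ofReal_le_ofReal
          have hsplitP : (r ^ ((n:ℕ):ℝ) * v) ^ (1/q)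
              = r ^ (((n:ℕ):ℝ) * (1/q)) * v ^ (1/q) := by
            rw [Real.mul_rpow (Real.rpow_nonneg hr.le _) hv, ← Real.rpow_mul hr.le]
          have hexp : -(lam/q) + ((n:ℕ):ℝ) * (1/q) = β := by
            rw [hqdef]
            field_simp
            ring
          have hcomb : r ^ (-(lam/q)) * r ^ (((n:ℕ):ℝ) * (1/q)) = r ^ β := by
            rw [← Real.rpow_add hr, hexp]
          have hrβ : r ^ β ≤ δ ^ β := Real.rpow_le_rpow hr.le hcase.le hβ.le
          have htr : t * r ^ β ≤ 2*c1*m := by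
            calc t * r ^ β ≤ t * δ ^ β := mul_le_mul_of_nonneg_left hrβ ht.le
              _ = 2*c1*m := by rw [hδβ]; field_simp
          calc r ^ (-(lam / q)) * (t * (r ^ ((n:ℕ):ℝ) * v) ^ (1/q))
              = (r ^ (-(lam/q)) * r ^ (((n:ℕ):ℝ) * (1/q))) * (t * v ^ (1/q)) := by
                rw [hsplitP]; ring
            _ = (t * r ^ β) * v ^ (1/q) := by rw [hcomb]; ring
            _ ≤ (2*c1*m) * v ^ (1/q) :=
                mul_le_mul_of_nonneg_right htr (Real.rpow_nonneg hv _)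
            _ = (2*c1*v ^ (1/q)) * m := by ring
            _ ≤ C * m := by
                refine mul_le_mul_of_nonneg_right ?_ hm.le
                rw [hCdef]
                linarith
      _ = ENNReal.ofReal C * M := by
          rw [hMm, ENNReal.ofReal_mul hC.le]
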